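/- There is a bijection between the set of ternary trees with n nodes and the set of S-Motzkin paths of length 3n. -/

import Mathlib

/-- The three step types of a Motzkin path: H = (1,0), U = (1,1), D = (1,-1). -/
inductive Step : Type | H | U | D
deriving DecidableEq, Repr

/-- Between every two consecutive H steps there is exactly one U step. -/
def OneUBetweenH (w : List Step) : Prop :=
  ∀ p mid s : List Step, w = p ++ Step.H :: mid ++ Step.H :: s →
    Step.H ∉ mid → mid.count Step.U = 1

/-- The k-th D step occurs after at least k H steps and at least k U steps. -/
def DCond (w : List Step) : Prop :=
  ∀ p s : List Step, w = p ++ Step.D :: s →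
    p.count Step.D + 1 ≤ p.count Step.H ∧ p.count Step.D + 1 ≤ p.count Step.U

/-- A Motzkin path: every prefix has #U ≥ #D, and the total height is 0. -/
def IsMotzkin (w : List Step) : Prop :=
  w.count Step.U = w.count Step.D ∧
  ∀ p : List Step, p <+: w → p.count Step.D ≤ p.count Step.U

/-- An S-Motzkin path of length 3n (original definition): a Motzkin path with n steps
of each type, starting with H, with exactly one U between consecutive H steps,
and where the k-th D occurs after at least k H steps and k U steps. -/
def IsSMotzkin (n : ℕ) (w : List Step) : Prop :=
  IsMotzkin w ∧ w.count Step.H = n ∧ w.count Step.U = n ∧ w.count Step.D = n ∧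
  (w ≠ [] → w.head? = some Step.H) ∧ OneUBetweenH w ∧ DCond w

/-- A ternary tree: either empty, or a node with left, middle and right subtrees. -/
inductive TernaryTree : Type
  | leaf : TernaryTree
  | node : TernaryTree → TernaryTree → TernaryTree → TernaryTree

/-- The number of nodes of a ternary tree. -/
def TernaryTree.size : TernaryTree → ℕ
  | .leaf => 0
  | .node a b c => 1 + a.size + b.size + c.size


open Step List

namespace SM

/-- counts -/
abbrev cH (l : List Step) := l.count Step.H
abbrev cU (l : List Step) := l.count Step.U
abbrev cD (l : List Step) := l.count Step.D

/-- prefix condition -/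
def ok (p : List Step) : Prop :=
  cD p ≤ cH p ∧ cD p ≤ cU p ∧ cU p ≤ cH p ∧ cH p ≤ cU p + 1

/-- structural characterization of S-Motzkin words -/
def Char (n : ℕ) (w : List Step) : Prop :=
  cH w = n ∧ cU w = n ∧ cD w = n ∧ ∀ p, p <+: w → ok p

/-- swap H and U -/
def sw : Step → Step | .H => .U | .U => .H | .D => .D

lemma sw_invol : ∀ s, sw (sw s) = s := by intro s; cases s <;> rfl

lemma sw_inj : Function.Injective sw := by
  intro a b h; cases a <;> cases b <;> simp_all [sw]

lemma map_sw_sw (l : List Step) : (l.map sw).map sw = l := by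
  simp only [List.map_map]
  conv_rhs => rw [← List.map_id l]
  exact List.map_congr_left (fun a _ => sw_invol a)

lemma cH_map (l : List Step) : cH (l.map sw) = cU l := by
  have := List.count_map_of_injective l sw sw_inj Step.U
  simpa [sw] using this

lemma cU_map (l : List Step) : cU (l.map sw) = cH l := by
  have := List.count_map_of_injective l sw sw_inj Step.H
  simpa [sw] using this

lemma cD_map (l : List Step) : cD (l.map sw) = cD l := by
  have := List.count_map_of_injective l sw sw_inj Step.D
  simpa [sw] using this

lemma length_eq_counts (l : List Step) : l.length = cH l + cU l + cD l := by
  induction l with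
  | nil => simp
  | cons a t ih =>
    cases a <;> simp only [List.length_cons, ih, cH, cU, cD, List.count_cons] <;> simp <;> omega

lemma prefix_append_cases {p x y : List Step} (h : p <+: x ++ y) :
    p <+: x ∨ ∃ q, q <+: y ∧ p = x ++ q := by
  rcases le_or_gt p.length x.length with hle | hlt
  · exact Or.inl (List.prefix_of_prefix_length_le h (List.prefix_append x y) hle)
  · have hx : x <+: p := List.prefix_of_prefix_length_le (List.prefix_append x y) h (le_of_lt hlt)
    obtain ⟨q, rfl⟩ := hx
    exact Or.inr ⟨q, (List.prefix_append_right_inj x).1 h, rfl⟩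

lemma prefix_map_cases {p : List Step} {l : List Step} (h : p <+: l.map sw) :
    ∃ q, q <+: l ∧ p = q.map sw := by
  refine ⟨p.map sw, ?_, (map_sw_sw p).symm⟩
  have := h.map sw
  rwa [map_sw_sw] at this

end SM

namespace SM

def phi : TernaryTree → List Step
  | .leaf => []
  | .node a b c =>
      Step.H :: ((phi a).map sw ++ Step.U :: (phi b ++ Step.D :: phi c))

lemma ok_nil : ok ([] : List Step) := by simp [ok]

lemma phi_char (T : TernaryTree) : Char T.size (phi T) := by
  induction T with
  | leaf =>
      refine ⟨rfl, rfl, rfl, ?_⟩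
      intro p hp
      rw [List.prefix_nil.1 hp]; exact ok_nil
  | node a b c iha ihb ihc =>
      obtain ⟨ha1, ha2, ha3, haP⟩ := iha
      obtain ⟨hb1, hb2, hb3, hbP⟩ := ihb
      obtain ⟨hc1, hc2, hc3, hcP⟩ := ihc
      have hAH : cH ((phi a).map sw) = a.size := by rw [cH_map, ha2]
      have hAU : cU ((phi a).map sw) = a.size := by rw [cU_map, ha1]
      have hAD : cD ((phi a).map sw) = a.size := by rw [cD_map, ha3]
      refine ⟨?_, ?_, ?_, ?_⟩
      · simp [phi, TernaryTree.size, List.count_append, List.count_cons, hAH, hb1, hc1]; omega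
      · simp [phi, TernaryTree.size, List.count_append, List.count_cons, hAU, hb2, hc2]; omega
      · simp [phi, TernaryTree.size, List.count_append, List.count_cons, hAD, hb3, hc3]; omega
      · intro p hp
        rw [phi] at hp
        rcases p with _ | ⟨e, q⟩
        · exact ok_nil
        · rw [List.cons_prefix_cons] at hp
          obtain ⟨rfl, hq⟩ := hp
          rcases prefix_append_cases hq with hqA | ⟨r, hr, rfl⟩
          · obtain ⟨q', hq', rfl⟩ := prefix_map_cases hqA
            obtain ⟨o1, o2, o3, o4⟩ := haP q' hq'
            simp only [ok, cH, cU, cD, List.count_cons, cH_map, cU_map, cD_map]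
            simp only [cH, cU, cD] at o1 o2 o3 o4
            simp; omega
          · rcases r with _ | ⟨e2, r⟩
            · obtain ⟨o1, o2, o3, o4⟩ := haP (phi a) (List.prefix_refl _)
              simp only [ok, cH, cU, cD, List.count_append, List.count_cons,
                List.append_nil, cH_map, cU_map, cD_map]
              simp only [cH, cU, cD] at o1 o2 o3 o4
              simp; omega
            · rw [List.cons_prefix_cons] at hr
              obtain ⟨rfl, hr⟩ := hr
              rcases prefix_append_cases hr with hrB | ⟨t, ht, rfl⟩
              · obtain ⟨o1, o2, o3, o4⟩ := hbP _ hrB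
                simp only [ok, cH, cU, cD, List.count_append, List.count_cons, hAH, hAU, hAD]
                simp only [cH, cU, cD] at o1 o2 o3 o4
                simp; omega
              · rcases t with _ | ⟨e3, t⟩
                · obtain ⟨o1, o2, o3, o4⟩ := hbP (phi b) (List.prefix_refl _)
                  simp only [ok, cH, cU, cD, List.count_append, List.count_cons,
                    List.append_nil, hAH, hAU, hAD]
                  simp only [cH, cU, cD] at o1 o2 o3 o4
                  simp; omega
                · rw [List.cons_prefix_cons] at ht
                  obtain ⟨rfl, ht⟩ := ht
                  obtain ⟨o1, o2, o3, o4⟩ := hcP _ ht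
                  obtain ⟨p1, p2, p3, p4⟩ := hbP (phi b) (List.prefix_refl _)
                  simp only [ok, cH, cU, cD, List.count_append, List.count_cons,
                    hAH, hAU, hAD, hb1, hb2, hb3]
                  simp only [cH, cU, cD] at o1 o2 o3 o4
                  simp; omega

end SM

namespace SM

lemma char_to_smotzkin {n w} (h : Char n w) : IsSMotzkin n w := by
  obtain ⟨h1, h2, h3, hP⟩ := h
  refine ⟨⟨h2.trans h3.symm, fun p hp => (hP p hp).2.1⟩, h1, h2, h3, ?_, ?_, ?_⟩
  · rintro hne
    rcases w with _ | ⟨e, t⟩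
    · exact absurd rfl hne
    · have hok := hP [e] ⟨t, rfl⟩
      cases e
      · rfl
      · exfalso; simp [ok, cH, cU, cD, List.count_cons] at hok
      · exfalso; simp [ok, cH, cU, cD, List.count_cons] at hok
  · intro p mid s hw hmid
    have hmidH : cH mid = 0 := List.count_eq_zero.2 hmid
    have o1 := hP (p ++ [Step.H]) ⟨mid ++ Step.H :: s, by simp [hw]⟩
    have o2 := hP (p ++ Step.H :: mid) ⟨Step.H :: s, by simp [hw]⟩
    have o3 := hP (p ++ Step.H :: mid ++ [Step.H]) ⟨s, by simp [hw]⟩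
    have o4 := hP p ⟨Step.H :: mid ++ Step.H :: s, by simp [hw]⟩
    simp only [ok, cH, cU, cD, List.count_append, List.count_cons] at o1 o2 o3 o4
    simp only [cH] at hmidH
    simp at o1 o2 o3 o4
    omega
  · intro p s hw
    have o := hP (p ++ [Step.D]) ⟨s, by simp [hw]⟩
    simp only [ok, cH, cU, cD, List.count_append, List.count_cons] at o
    simp at o
    omega

/-- projection away from D -/
def proj (l : List Step) : List Step := l.filter (fun s => !(s == Step.D))

lemma cH_proj (l : List Step) : cH (proj l) = cH l := List.count_filter (by simp)
lemma cU_proj (l : List Step) : cU (proj l) = cU l := List.count_filter (by simp)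
lemma cD_proj (l : List Step) : cD (proj l) = 0 := by
  apply List.count_eq_zero.2
  intro hmem
  have := List.of_mem_filter hmem
  simp at this

lemma length_proj (l : List Step) : (proj l).length = cH l + cU l := by
  have := length_eq_counts (proj l)
  rw [cH_proj, cU_proj, cD_proj] at this
  omega

lemma proj_noH {mid : List Step} (hmid : Step.H ∉ mid) (hU : cU mid = 1) :
    proj mid = [Step.U] := by
  have hlen : (proj mid).length = 1 := by
    have h0 : cH mid = 0 := List.count_eq_zero.2 hmid
    rw [length_proj]
    omega
  rcases q : proj mid with _ | ⟨e, t⟩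
  · rw [q] at hlen; simp at hlen
  · rw [q] at hlen
    simp at hlen
    subst hlen
    have hmem : e ∈ proj mid := by rw [q]; simp
    have h1 : e ∈ mid := List.mem_of_mem_filter hmem
    have h2 := List.of_mem_filter hmem
    cases e
    · exact absurd h1 hmid
    · rfl
    · simp at h2

/-- the alternating word (HU)^n -/
def alt : ℕ → List Step
  | 0 => []
  | n+1 => Step.H :: Step.U :: alt n

lemma first_occ {a : Step} {l : List Step} (h : a ∈ l) :
    ∃ m s, l = m ++ a :: s ∧ a ∉ m := by
  induction l with
  | nil => simp at h
  | cons e t ih =>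
    by_cases he : a = e
    · subst he; exact ⟨[], t, rfl, by simp⟩
    · have : a ∈ t := by rcases List.mem_cons.1 h with h' | h'; exact absurd h' he; exact h'
      obtain ⟨m, s, rfl, hm⟩ := ih this
      exact ⟨e :: m, s, rfl, by simp [hm]; exact fun h' => he h'⟩

lemma skel (N : ℕ) : ∀ w : List Step, w.length ≤ N →
    (w ≠ [] → w.head? = some Step.H) → OneUBetweenH w → cU w = cH w →
    proj w = alt (cH w) := by
  induction N with
  | zero =>
    intro w hw _ _ _
    have : w = [] := List.length_eq_zero_iff.1 (Nat.le_zero.1 hw)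
    subst this; rfl
  | succ N ih =>
    intro w hlen hhead h1 hcu
    rcases w with _ | ⟨e, t⟩
    · rfl
    · have he : e = Step.H := by
        have := hhead (by simp)
        simpa using this
      subst he
      by_cases hHt : Step.H ∈ t
      · obtain ⟨mid, s, rfl, hmid⟩ := first_occ hHt
        have hu1 : cU mid = 1 := h1 [] mid s (by simp) hmid
        have hmidH : cH mid = 0 := List.count_eq_zero.2 hmid
        set w' := Step.H :: s with hw'
        have h1' : OneUBetweenH w' := by
          intro p m s' heq hm
          exact h1 (Step.H :: mid ++ p) m s' (by simp [heq]) hm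
        have hcntH : cH (Step.H :: (mid ++ Step.H :: s)) = 1 + cH w' := by
          simp [cH, List.count_cons, List.count_append, hw']
          simp only [cH] at hmidH
          omega
        have hcntU : cU w' = cH w' := by
          simp only [cH, cU, List.count_cons, List.count_append] at hcu hcntH ⊢
          simp only [cU] at hu1
          simp only [cH] at hmidH
          simp at hcu hcntH ⊢
          omega
        have hlen' : w'.length ≤ N := by
          simp only [hw', List.length_cons, List.length_append] at hlen ⊢
          omega
        have ihw := ih w' hlen' (fun _ => rfl) h1' hcntU
        have : proj (Step.H :: (mid ++ Step.H :: s)) = Step.H :: proj mid ++ proj w' := by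
          simp [proj, List.filter_append, hw']
        rw [this, proj_noH hmid hu1, ihw, hcntH]
        have : 1 + cH w' = cH w' + 1 := by omega
        rw [this]
        rfl
      · have hch : cH (Step.H :: t) = 1 := by
          simp [cH, List.count_cons, List.count_eq_zero.2 hHt]
        have hcu1 : cU t = 1 := by
          simp only [cU, cH, List.count_cons] at hcu hch ⊢
          simp at hcu hch
          omega
        have : proj (Step.H :: t) = Step.H :: proj t := by simp [proj]
        rw [this, proj_noH hHt hcu1, hch]
        rfl

lemma alt_prefix : ∀ n, ∀ q : List Step, q <+: alt n →
    cU q ≤ cH q ∧ cH q ≤ cU q + 1 := by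
  intro n
  induction n with
  | zero =>
    intro q hq
    rw [List.prefix_nil.1 hq]; simp
  | succ n ih =>
    intro q hq
    rcases q with _ | ⟨e, q⟩
    · simp
    · rw [show alt (n+1) = Step.H :: Step.U :: alt n from rfl, List.cons_prefix_cons] at hq
      obtain ⟨rfl, hq⟩ := hq
      rcases q with _ | ⟨e, q⟩
      · simp [cH, cU, List.count_cons]
      · rw [List.cons_prefix_cons] at hq
        obtain ⟨rfl, hq⟩ := hq
        have := ih q hq
        simp only [cH, cU, List.count_cons] at this ⊢
        simp
        omega

lemma dcond_pre {w : List Step} (hD : DCond w) :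
    ∀ p, p <+: w → cD p ≤ cH p ∧ cD p ≤ cU p := by
  intro p
  induction p using List.reverseRecOn with
  | nil => simp
  | append_singleton l a ihl =>
    intro hp
    have hl : l <+: w := (List.prefix_append l [a]).trans hp
    have ihl' := ihl hl
    cases a
    · simp only [cD, cH, cU, List.count_append, List.count_cons] at ihl' ⊢; simp; omega
    · simp only [cD, cH, cU, List.count_append, List.count_cons] at ihl' ⊢; simp; omega
    · obtain ⟨r, hr⟩ := hp
      have := hD l r (by rw [← hr]; simp)
      simp only [cD, cH, cU, List.count_append, List.count_cons] at *
      simp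
      omega

lemma smotzkin_to_char {n w} (h : IsSMotzkin n w) : Char n w := by
  obtain ⟨⟨hm1, hm2⟩, h1, h2, h3, hhead, hone, hdc⟩ := h
  refine ⟨h1, h2, h3, ?_⟩
  intro p hp
  have hd := dcond_pre hdc p hp
  have hskel : proj w = alt (cH w) := skel w.length w le_rfl hhead hone (h2.trans h1.symm)
  have hpp : proj p <+: alt (cH w) := by rw [← hskel]; exact hp.filter _
  have halt := alt_prefix (cH w) (proj p) hpp
  rw [cH_proj, cU_proj] at halt
  exact ⟨hd.1, hd.2, halt.1, halt.2⟩

end SM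

namespace SM

lemma no_lt1 {L C L' C' : List Step}
    (hL' : ∀ p, p <+: L' → cD p ≤ cH p) (hLb : cH L = cD L)
    (heq : L ++ Step.D :: C = L' ++ Step.D :: C') : ¬ L.length < L'.length := by
  intro hlt
  have h1 : L ++ [Step.D] <+: L' := by
    apply List.prefix_of_prefix_length_le (l₃ := L' ++ Step.D :: C')
    · rw [← heq]; exact ⟨C, by simp⟩
    · exact ⟨Step.D :: C', rfl⟩
    · simp; omega
  have h2 := hL' _ h1
  simp only [cD, cH, List.count_append, List.count_cons] at h2 hLb
  simp at h2
  omega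

lemma no_lt2 {A B A' B' : List Step}
    (hA : cU A = cD A) (hA' : cU A' = cD A')
    (hB : ∀ r, r <+: B → cD r ≤ cU r)
    (heq : A ++ Step.U :: B = A' ++ Step.U :: B') : ¬ A.length < A'.length := by
  intro hlt
  have h1 : A ++ [Step.U] <+: A' := by
    apply List.prefix_of_prefix_length_le (l₃ := A' ++ Step.U :: B')
    · rw [← heq]; exact ⟨B, by simp⟩
    · exact ⟨Step.U :: B', rfl⟩
    · simp; omega
  obtain ⟨m, hm⟩ := h1
  have hBm : B = m ++ Step.U :: B' := by
    have h0 : A ++ Step.U :: B = A ++ Step.U :: (m ++ Step.U :: B') := by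
      rw [heq, ← hm]; simp
    have h4 := List.append_cancel_left h0
    injection h4
  have hmB : m <+: B := ⟨Step.U :: B', hBm.symm⟩
  have h3 := hB m hmB
  have : cU A' = cU A + 1 + cU m ∧ cD A' = cD A + cD m := by
    constructor <;> (rw [← hm]; simp only [cU, cD, List.count_append, List.count_cons]; simp)
  omega

lemma parse_unique {A B C A' B' C' : List Step}
    (hL : ∀ p, p <+: A ++ Step.U :: B → cD p ≤ cH p)
    (hL' : ∀ p, p <+: A' ++ Step.U :: B' → cD p ≤ cH p)
    (hLb : cH (A ++ Step.U :: B) = cD (A ++ Step.U :: B))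
    (hLb' : cH (A' ++ Step.U :: B') = cD (A' ++ Step.U :: B'))
    (hA : cU A = cD A) (hA' : cU A' = cD A')
    (hB : ∀ r, r <+: B → cD r ≤ cU r) (hB' : ∀ r, r <+: B' → cD r ≤ cU r)
    (heq : A ++ Step.U :: (B ++ Step.D :: C) = A' ++ Step.U :: (B' ++ Step.D :: C')) :
    A = A' ∧ B = B' ∧ C = C' := by
  have heq1 : (A ++ Step.U :: B) ++ Step.D :: C = (A' ++ Step.U :: B') ++ Step.D :: C' := by
    simpa using heq
  have hlen1 : (A ++ Step.U :: B).length = (A' ++ Step.U :: B').length := by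
    have n1 := no_lt1 hL' hLb heq1
    have n2 := no_lt1 hL hLb' heq1.symm
    omega
  obtain ⟨heqL, heqC⟩ := List.append_inj heq1 hlen1
  have hC : C = C' := by injection heqC
  have hlen2 : A.length = A'.length := by
    have n1 := no_lt2 hA hA' hB heqL
    have n2 := no_lt2 hA' hA hB' heqL.symm
    omega
  obtain ⟨hA2, hB2⟩ := List.append_inj heqL hlen2
  exact ⟨hA2, by injection hB2, hC⟩

lemma piece_facts {x B : List Step} {i j : ℕ} (hx : Char i x) (hB : Char j B) :
    (∀ p, p <+: x.map sw ++ Step.U :: B → cD p ≤ cH p) ∧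
    cH (x.map sw ++ Step.U :: B) = cD (x.map sw ++ Step.U :: B) ∧
    cU (x.map sw) = cD (x.map sw) ∧
    (∀ r, r <+: B → cD r ≤ cU r) := by
  obtain ⟨hx1, hx2, hx3, hxP⟩ := hx
  obtain ⟨hb1, hb2, hb3, hbP⟩ := hB
  have e1 := cH_map x
  have e2 := cU_map x
  have e3 := cD_map x
  simp only [cH, cU, cD] at hx1 hx2 hx3 hb1 hb2 hb3 e1 e2 e3
  refine ⟨?_, ?_, ?_, fun r hr => (hbP r hr).2.1⟩
  · intro p hp
    rcases prefix_append_cases hp with hpA | ⟨q, hq, rfl⟩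
    · obtain ⟨q', hq', rfl⟩ := prefix_map_cases hpA
      have h5 := (hxP q' hq').2.1
      have f1 := cH_map q'
      have f3 := cD_map q'
      simp only [cH, cU, cD] at h5 f1 f3 ⊢
      omega
    · rcases q with _ | ⟨e, q⟩
      · simp only [cD, cH, List.count_append, List.count_nil]
        omega
      · rw [List.cons_prefix_cons] at hq
        obtain ⟨rfl, hq⟩ := hq
        have h5 := (hbP q hq).1
        simp only [cD, cH, List.count_append, List.count_cons] at h5 ⊢
        simp
        omega
  · simp only [cH, cD, List.count_append, List.count_cons]
    simp
    omega
  · simp only [cU, cD] at e2 e3 ⊢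
    omega

lemma phi_inj : ∀ T T' : TernaryTree, phi T = phi T' → T = T' := by
  intro T
  induction T with
  | leaf =>
    intro T' h
    cases T' with
    | leaf => rfl
    | node a b c => simp [phi] at h
  | node a b c iha ihb ihc =>
    intro T' h
    cases T' with
    | leaf => simp [phi] at h
    | node a' b' c' =>
      simp only [phi, List.cons.injEq] at h
      obtain ⟨-, h⟩ := h
      obtain ⟨f1, f2, f3, f4⟩ := piece_facts (phi_char a) (phi_char b)
      obtain ⟨g1, g2, g3, g4⟩ := piece_facts (phi_char a') (phi_char b')
      obtain ⟨e1, e2, e3⟩ := parse_unique f1 g1 f2 g2 f3 g3 f4 g4 h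
      have ha : a = a' := iha a' (by
        have := congrArg (List.map sw) e1
        rwa [map_sw_sw, map_sw_sw] at this)
      rw [ha, ihb b' e2, ihc c' e3]

end SM

namespace SM

def Pd (s : List Step) (k : ℕ) : Prop :=
  (s.take k).count Step.H + 1 ≤ (s.take k).count Step.D

instance (s : List Step) : DecidablePred (Pd s) := fun k => by unfold Pd; infer_instance

def Qd (s : List Step) (m : ℕ) : Prop :=
  (s.take m).count Step.U = (s.take m).count Step.D

instance (s : List Step) : DecidablePred (Qd s) := fun m => by unfold Qd; infer_instance

lemma take_eq_of_prefix {q s : List Step} (h : q <+: s) : q = s.take q.length :=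
  List.prefix_iff_eq_take.1 h

lemma parse_exists {n : ℕ} {w : List Step} (h : Char (n+1) w) :
    ∃ A B C i j k, w = Step.H :: (A ++ Step.U :: (B ++ Step.D :: C)) ∧
      Char i (A.map sw) ∧ Char j B ∧ Char k C ∧ i + j + k = n := by
  obtain ⟨h1, h2, h3, hP⟩ := h
  -- w = H :: s
  obtain ⟨s, rfl⟩ : ∃ s, w = Step.H :: s := by
    rcases w with _ | ⟨e, t⟩
    · exfalso; simp only [cH, List.count_nil] at h1; omega
    · have hok := hP [e] ⟨t, rfl⟩
      cases e
      · exact ⟨t, rfl⟩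
      · exfalso; simp [ok, cH, cU, cD, List.count_cons] at hok
      · exfalso; simp [ok, cH, cU, cD, List.count_cons] at hok
  simp only [cH, cU, cD, List.count_cons] at h1 h2 h3
  simp at h1 h2 h3
  have hs1 : s.count Step.H = n := by omega
  have hs2 : s.count Step.U = n + 1 := by omega
  have hs3 : s.count Step.D = n + 1 := by omega
  -- the key prefix conditions
  have key : ∀ q : List Step, q <+: s →
      q.count Step.D ≤ q.count Step.H + 1 ∧ q.count Step.D ≤ q.count Step.U ∧
      q.count Step.U ≤ q.count Step.H + 1 ∧ q.count Step.H ≤ q.count Step.U := by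
    intro q hq
    have hok := hP (Step.H :: q) (List.cons_prefix_cons.2 ⟨rfl, hq⟩)
    simp only [ok, cH, cU, cD, List.count_cons] at hok
    simp at hok
    omega
  -- find the distinguished D
  have hex : ∃ k, Pd s k := ⟨s.length, by simp [Pd, List.take_length]; omega⟩
  set k₀ := Nat.find hex with hk₀
  have hk₀P : Pd s k₀ := Nat.find_spec hex
  have hk₀min : ∀ m, m < k₀ → ¬ Pd s m := fun m hm => Nat.find_min hex hm
  have hk₀pos : 0 < k₀ := by
    rcases Nat.eq_zero_or_pos k₀ with h0 | h0
    · exfalso; rw [h0] at hk₀P; simp [Pd] at hk₀P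
    · exact h0
  have hk₀le : k₀ ≤ s.length := Nat.find_le (by simp [Pd, List.take_length]; omega)
  set P₀ := s.take (k₀ - 1) with hP₀
  have hidx : k₀ - 1 < s.length := by omega
  have htk : s.take k₀ = P₀ ++ [s[k₀-1]] := by
    conv_lhs => rw [show k₀ = (k₀ - 1) + 1 by omega]
    rw [List.take_succ, List.getElem?_eq_getElem hidx, hP₀]
    rfl
  have hnP : ¬ Pd s (k₀ - 1) := hk₀min _ (by omega)
  have hDbal : s[k₀-1] = Step.D ∧ P₀.count Step.D = P₀.count Step.H := by
    have hPf := hk₀P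
    simp only [Pd, htk, List.count_append, List.count_cons, List.count_nil] at hPf
    simp only [Pd, ← hP₀] at hnP
    cases hget : s[k₀-1] <;> rw [hget] at hPf <;> simp at hPf <;> [skip; skip; exact ⟨rfl, by omega⟩]
    · exact absurd (by omega) hnP
    · exact absurd (by omega) hnP
  have hsd : s = P₀ ++ Step.D :: s.drop k₀ := by
    conv_lhs => rw [← List.take_append_drop k₀ s]
    rw [htk, hDbal.1]
    simp
  have hP₀pre : P₀ <+: s := List.take_prefix _ _
  have hP₀len : P₀.length = k₀ - 1 := by
    simp [hP₀, List.length_take]; omega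
  -- first-passage fact
  have FF : ∀ q, q <+: P₀ → q.count Step.D ≤ q.count Step.H := by
    intro q hq
    have hq' : q <+: s := hq.trans hP₀pre
    have hlq : q.length ≤ k₀ - 1 := by
      have := hq.length_le; omega
    have hqt : q = s.take q.length := take_eq_of_prefix hq'
    have := hk₀min q.length (by omega)
    simp only [Pd, ← hqt] at this
    omega
  -- G fact (using distinguished D)
  have Gf : P₀.count Step.D + 1 ≤ P₀.count Step.U := by
    have hpre : P₀ ++ [Step.D] <+: s := by
      rw [← hDbal.1, ← htk]; exact List.take_prefix _ _
    have := (key _ hpre).2.1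
    simp only [List.count_append, List.count_cons, List.count_nil] at this
    simp at this
    omega
  -- find the distinguished U
  set a := Nat.findGreatest (Qd P₀) P₀.length with ha
  have hQa : Qd P₀ a := Nat.findGreatest_spec (Nat.zero_le _) (by simp [Qd])
  have ha_le : a ≤ P₀.length := Nat.findGreatest_le _
  have hmax : ∀ m, a < m → m ≤ P₀.length → ¬ Qd P₀ m :=
    fun m h1 h2 => Nat.findGreatest_is_greatest h1 h2
  have ha_lt : a < P₀.length := by
    rcases Nat.lt_or_ge a P₀.length with h5 | h5
    · exact h5
    · exfalso
      have : a = P₀.length := by omega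
      have hq := hQa
      rw [this] at hq
      simp only [Qd, List.take_length] at hq
      omega
  set A := P₀.take a with hA
  have htka : P₀.take (a+1) = A ++ [P₀[a]] := by
    conv_lhs => rw [List.take_succ]
    rw [List.getElem?_eq_getElem ha_lt, hA]
    rfl
  have hApre : A <+: P₀ := List.take_prefix _ _
  have hApres : A <+: s := hApre.trans hP₀pre
  have hAlen : A.length = a := by simp [hA, List.length_take]; omega
  have hnQ : ¬ Qd P₀ (a+1) := hmax _ (by omega) (by omega)
  have hQA : A.count Step.U = A.count Step.D := hQa
  have hU : P₀[a] = Step.U := by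
    have hpre : P₀.take (a+1) <+: s := (List.take_prefix _ _).trans hP₀pre
    have hk2 := (key _ hpre).2.1
    simp only [Qd, htka, List.count_append, List.count_cons, List.count_nil] at hnQ hk2
    cases hget : P₀[a] <;> rw [hget] at hnQ hk2 <;> simp at hnQ hk2 <;> first | rfl | (exfalso; omega)
  set B := P₀.drop (a+1) with hB
  have hP₀split : P₀ = A ++ Step.U :: B := by
    conv_lhs => rw [← List.take_append_drop (a+1) P₀]
    rw [htka, hU]
    simp [hB]
  -- counts of A
  have hAU : A.count Step.H = A.count Step.U := by
    have h6 := (key A hApres).2.2.2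
    have hpre : A ++ [Step.U] <+: s := by
      rw [← hU, ← htka]; exact (List.take_prefix _ _).trans hP₀pre
    have h7 := (key _ hpre).2.2.1
    simp only [List.count_append, List.count_cons, List.count_nil] at h7
    simp at h7
    omega
  set i := A.count Step.U with hi
  -- counts of B
  have hBpre : ∀ r, r <+: B → A ++ Step.U :: r <+: P₀ := by
    intro r hr
    rw [hP₀split]
    exact (List.prefix_append_right_inj A).2 (List.cons_prefix_cons.2 ⟨rfl, hr⟩)
  have hcntP₀ : P₀.count Step.H = i + B.count Step.H ∧
      P₀.count Step.U = i + 1 + B.count Step.U ∧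
      P₀.count Step.D = i + B.count Step.D := by
    rw [hP₀split]
    simp only [List.count_append, List.count_cons]
    simp
    omega
  have hBcnt : B.count Step.H = B.count Step.U ∧ B.count Step.D = B.count Step.U := by
    have h6 := (key P₀ hP₀pre).2.2
    have h7 := hDbal.2
    omega
  set j := B.count Step.U with hj
  set C := s.drop k₀ with hC
  -- counts of C
  have hcnts : s.count Step.H = i + j + C.count Step.H ∧
      s.count Step.U = i + 1 + j + C.count Step.U ∧
      s.count Step.D = i + j + 1 + C.count Step.D := by
    refine ⟨?_, ?_, ?_⟩ <;>
      (rw [hsd, hP₀split]; simp only [List.count_append, List.count_cons]; simp; omega)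
  set k := C.count Step.H with hk
  have hCcnt : C.count Step.U = k ∧ C.count Step.D = k := by omega
  have hijk : i + j + k = n := by omega
  refine ⟨A, B, C, i, j, k, ?_, ?_, ?_, ?_, hijk⟩
  · rw [hsd, hP₀split]; simp
  · -- Char i (A.map sw)
    have e1 := cH_map A; have e2 := cU_map A; have e3 := cD_map A
    simp only [cH, cU, cD] at e1 e2 e3
    refine ⟨by simp only [cH]; omega, by simp only [cU]; omega, by simp only [cD]; omega, ?_⟩
    intro p hp
    obtain ⟨q', hq', rfl⟩ := prefix_map_cases hp
    have o1 := (key q' (hq'.trans hApres)).2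
    have o2 := FF q' (hq'.trans hApre)
    have f1 := cH_map q'; have f2 := cU_map q'; have f3 := cD_map q'
    simp only [ok, cH, cU, cD] at f1 f2 f3 ⊢
    omega
  · -- Char j B
    refine ⟨by simp only [cH]; omega, rfl, by simp only [cD]; omega, ?_⟩
    intro r hr
    have hq := hBpre r hr
    have hqs : A ++ Step.U :: r <+: s := hq.trans hP₀pre
    have o1 := key _ hqs
    have o2 := FF _ hq
    have o3 : ¬ Qd P₀ (a + 1 + r.length) := by
      apply hmax
      · omega
      · have := hq.length_le
        simp only [List.length_append, List.length_cons] at this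
        omega
    have hqt : A ++ Step.U :: r = P₀.take (a + 1 + r.length) := by
      have h8 := take_eq_of_prefix hq
      simp only [List.length_append, List.length_cons, hAlen] at h8
      rw [h8]
      congr 1
      omega
    simp only [Qd] at o3
    rw [← hqt] at o3
    simp only [List.count_append, List.count_cons, List.count_nil] at o1 o2 o3
    simp at o1 o2 o3
    simp only [ok, cH, cU, cD]
    omega
  · -- Char k C
    refine ⟨rfl, hCcnt.1, hCcnt.2, ?_⟩
    intro t ht
    have hq : P₀ ++ Step.D :: t <+: s := by
      rw [hsd]
      exact (List.prefix_append_right_inj P₀).2 (List.cons_prefix_cons.2 ⟨rfl, ht⟩)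
    have o1 := key _ hq
    simp only [List.count_append, List.count_cons] at o1
    simp at o1
    simp only [ok, cH, cU, cD]
    omega

lemma phi_surj : ∀ n : ℕ, ∀ w : List Step, Char n w →
    ∃ T : TernaryTree, T.size = n ∧ phi T = w := by
  intro n
  induction n using Nat.strong_induction_on with
  | _ n ih =>
    intro w hw
    rcases n with _ | m
    · refine ⟨.leaf, rfl, ?_⟩
      obtain ⟨h1, h2, h3, -⟩ := hw
      have := length_eq_counts w
      rw [h1, h2, h3] at this
      have hw0 : w.length = 0 := by omega
      simp [phi]
      exact List.length_eq_zero_iff.1 hw0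
    · obtain ⟨A, B, C, i, j, k, hw', hA, hB, hC, hijk⟩ := parse_exists hw
      obtain ⟨a, ha, hpa⟩ := ih i (by omega) _ hA
      obtain ⟨b, hb, hpb⟩ := ih j (by omega) _ hB
      obtain ⟨c, hc, hpc⟩ := ih k (by omega) _ hC
      refine ⟨.node a b c, ?_, ?_⟩
      · simp [TernaryTree.size, ha, hb, hc]; omega
      · rw [phi, hpa, hpb, hpc, map_sw_sw, hw']

end SM

theorem ternary_trees_equiv_smotzkin (n : ℕ) :
    Nonempty ({T : TernaryTree // T.size = n} ≃ {w : List Step // IsSMotzkin n w}) := by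
  refine ⟨Equiv.ofBijective
    (fun T => ⟨SM.phi T.1, SM.char_to_smotzkin (by obtain ⟨T', rfl⟩ := T; exact SM.phi_char T')⟩) ⟨?_, ?_⟩⟩
  · rintro ⟨T, hT⟩ ⟨T', hT'⟩ h
    simp only [Subtype.mk.injEq] at h ⊢
    exact SM.phi_inj T T' h
  · rintro ⟨w, hw⟩
    obtain ⟨T, hT, hpT⟩ := SM.phi_surj n w (SM.smotzkin_to_char hw)
    exact ⟨⟨T, hT⟩, Subtype.ext hpT⟩
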